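/- Let A be an n × n matrix with nonnegative real entries. Then per(A) ≤ ∏_{i=1}^n ( Σ_{j=1}^n A(i,j) ), i.e., the permanent is bounded above by the product of the row sums. Moreover, the Soules bound is at least as tight: ∏_{i=1}^n Σ_{j=1}^n a*_{ij} δ(j) ≤ ∏_{i=1}^n Σ_{j=1}^n A(i,j), where a*_{i1} ≥ ⋯ ≥ a*_{in} is the nonincreasing rearrangement of row i, γ(0)=0, γ(k)=(k!)^{1/k}, and δ(k)=γ(k)−γ(k−1). -/

import Mathlib

/-- The permanent of a square matrix: `per A = ∑ σ, ∏ j, A j (σ j)`. -/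
noncomputable def perm {n : ℕ} (A : Matrix (Fin n) (Fin n) ℝ) : ℝ :=
  ∑ σ : Equiv.Perm (Fin n), ∏ j, A j (σ j)

/-- `γ 0 = 0` and `γ k = (k!)^(1/k)` for `k ≥ 1`. -/
noncomputable def gam : ℕ → ℝ
  | 0 => 0
  | (k + 1) => ((k + 1).factorial : ℝ) ^ (1 / ((k : ℝ) + 1))

/-- `δ k = γ k - γ (k - 1)`. -/
noncomputable def del (k : ℕ) : ℝ := gam k - gam (k - 1)

lemma gam_nonneg (k : ℕ) : 0 ≤ gam k := by
  cases k with
  | zero => simp [gam]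
  | succ k => exact Real.rpow_nonneg (by positivity) _

lemma gam_succ (k : ℕ) : gam (k + 1) = ((k + 1).factorial : ℝ) ^ (((k + 1 : ℕ) : ℝ))⁻¹ := by
  simp [gam, one_div]

lemma gam_pow (k : ℕ) : gam (k + 1) ^ (k + 1) = ((k + 1).factorial : ℝ) := by
  rw [gam_succ]
  exact Real.rpow_inv_natCast_pow (by positivity) (Nat.succ_ne_zero k)

lemma gam_succ_le (k : ℕ) : gam (k + 1) ≤ (k : ℝ) + 2 := by
  rw [← pow_le_pow_iff_left₀ (gam_nonneg _) (by positivity) (Nat.succ_ne_zero k),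
    gam_pow]
  calc ((k + 1).factorial : ℝ) ≤ ((k + 1 : ℕ) : ℝ) ^ (k + 1) := by
        exact_mod_cast Nat.cast_le.mpr (Nat.factorial_le_pow (k + 1))
    _ ≤ ((k : ℝ) + 2) ^ (k + 1) := by
        apply pow_le_pow_left₀ (by positivity); push_cast; linarith

lemma del_nonneg (k : ℕ) : 0 ≤ del k := by
  cases k with
  | zero => simp [del, gam]
  | succ k =>
    rw [del, sub_nonneg]
    show gam k ≤ gam (k + 1)
    cases k with
    | zero => simpa [gam] using gam_nonneg 1
    | succ k =>
      set g := gam (k + 1) with hg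
      have hg0 : 0 ≤ g := gam_nonneg _
      have h1 : g ^ (k + 2) ≤ ((k + 2).factorial : ℝ) := by
        have : g ^ (k + 2) = ((k + 1).factorial : ℝ) * g := by
          rw [pow_succ, gam_pow]
        rw [this, Nat.factorial_succ (k + 1)]
        push_cast
        calc ((k + 1).factorial : ℝ) * g ≤ ((k + 1).factorial : ℝ) * ((k : ℝ) + 2) := by
              exact mul_le_mul_of_nonneg_left (gam_succ_le k) (by positivity)
          _ = ((k : ℝ) + 1 + 1) * ((k + 1).factorial : ℝ) := by ring
        
      calc g = (g ^ (k + 2) : ℝ) ^ (((k + 2 : ℕ) : ℝ))⁻¹ :=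
            (Real.pow_rpow_inv_natCast hg0 (Nat.succ_ne_zero _)).symm
        _ ≤ ((k + 2).factorial : ℝ) ^ (((k + 2 : ℕ) : ℝ))⁻¹ :=
            Real.rpow_le_rpow (by positivity) h1 (by positivity)
        _ = gam (k + 2) := (gam_succ (k + 1)).symm

lemma del_le_one (k : ℕ) : del k ≤ 1 := by
  cases k with
  | zero => simp [del, gam]
  | succ k =>
    rw [del, sub_le_iff_le_add]
    show gam (k + 1) ≤ 1 + gam k
    cases k with
    | zero => simp [gam]
    | succ k =>
      set g := gam (k + 1) with hg
      have hg0 : 0 ≤ g := gam_nonneg _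
      have hbin : ((k + 2).factorial : ℝ) ≤ (g + 1) ^ (k + 2) := by
        have hfac : ((k + 2).factorial : ℝ) = ((k : ℝ) + 2) * g ^ (k + 1) := by
          rw [gam_pow, Nat.factorial_succ (k + 1)]; push_cast; ring
        rw [hfac, add_pow]
        have hmem : (k + 1) ∈ Finset.range (k + 2 + 1) := by
          simp
        have := Finset.single_le_sum
          (f := fun i => g ^ i * 1 ^ (k + 2 - i) * ((k + 2).choose i : ℝ))
          (fun i _ => by positivity) hmem
        have heq : g ^ (k + 1) * 1 ^ (k + 2 - (k + 1)) * ((k + 2).choose (k + 1) : ℝ)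
            = ((k : ℝ) + 2) * g ^ (k + 1) := by
          simp [Nat.choose_succ_self_right]; push_cast; ring
        rw [← heq]; exact this
      calc gam (k + 2) = ((k + 2).factorial : ℝ) ^ (((k + 2 : ℕ) : ℝ))⁻¹ := gam_succ (k + 1)
        _ ≤ ((g + 1) ^ (k + 2)) ^ (((k + 2 : ℕ) : ℝ))⁻¹ :=
            Real.rpow_le_rpow (by positivity) hbin (by positivity)
        _ = g + 1 := Real.pow_rpow_inv_natCast (by positivity) (Nat.succ_ne_zero _)
        _ = 1 + g := add_comm _ _

/-- The permanent of a nonnegative matrix is at most the product of its row sums, and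
the Soules bound `∏ i, ∑ j, a*_{ij} δ j` (with `a*_{i1} ≥ ⋯ ≥ a*_{in}` the
nonincreasing rearrangement of row `i`) is at least as tight as the row-sum bound. -/
theorem permanent_le_row_sums_and_soules_tighter
    {n : ℕ} (A : Matrix (Fin n) (Fin n) ℝ) (hA : ∀ i j, 0 ≤ A i j)
    (τ : Fin n → Equiv.Perm (Fin n))
    (h_sorted : ∀ i, Antitone (fun j => A i (τ i j))) :
    perm A ≤ ∏ i : Fin n, ∑ j : Fin n, A i j ∧
      ∏ i : Fin n, ∑ j : Fin n, A i (τ i j) * del (j.val + 1) ≤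
        ∏ i : Fin n, ∑ j : Fin n, A i j := by
  constructor
  · -- permanent ≤ product of row sums
    have hexp : ∏ i : Fin n, ∑ j : Fin n, A i j
        = ∑ f : Fin n → Fin n, ∏ i : Fin n, A i (f i) := by
      exact Fintype.prod_sum (fun i j => A i j)
    rw [hexp, perm]
    have himg : ∑ σ : Equiv.Perm (Fin n), ∏ j, A j (σ j)
        = ∑ f ∈ Finset.univ.image (fun σ : Equiv.Perm (Fin n) => (σ : Fin n → Fin n)),
            ∏ j, A j (f j) := by
      rw [Finset.sum_image]
      intro σ _ σ' _ h
      exact Equiv.coe_fn_injective h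
    rw [himg]
    apply Finset.sum_le_sum_of_subset_of_nonneg (Finset.subset_univ _)
    intro f _ _
    exact Finset.prod_nonneg fun j _ => hA j (f j)
  · -- Soules bound is tighter
    apply Finset.prod_le_prod
    · intro i _
      exact Finset.sum_nonneg fun j _ =>
        mul_nonneg (hA i (τ i j)) (del_nonneg _)
    · intro i _
      calc ∑ j : Fin n, A i (τ i j) * del (j.val + 1)
          ≤ ∑ j : Fin n, A i (τ i j) := by
            apply Finset.sum_le_sum
            intro j _
            calc A i (τ i j) * del (j.val + 1) ≤ A i (τ i j) * 1 :=
                  mul_le_mul_of_nonneg_left (del_le_one _) (hA i (τ i j))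
              _ = A i (τ i j) := mul_one _
        _ = ∑ j : Fin n, A i j := Equiv.sum_comp (τ i) (fun j => A i j)
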